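/- arXiv:1901.10072 — 4 statements merged into one kernel-verified Lean document; each statement's English description precedes it below -/
import Mathlib

section
/- If |Θ| ≥ 3, then the double negation of any belief structure m on Θ is the vacuous belief structure: m̄̄(Θ) = 1 and m̄̄(B) = 0 for all B ≠ Θ. -/
open Finset

variable {α : Type*} [Fintype α] [DecidableEq α]

/-- Set-negation: neg(A) = ⋃_{θ∈A} (Θ∖{θ}). -/
def negSet (A : Finset α) : Finset α := A.biUnion (fun θ => Finset.univ \ {θ})

/-- Negation of a belief structure: m̄(B) = ∑_{A nonempty, neg(A)=B} m(A). -/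
noncomputable def negBS (m : Finset α → ℝ) (B : Finset α) : ℝ :=
  ∑ A ∈ Finset.univ.filter (fun A : Finset α => A.Nonempty ∧ negSet A = B), m A

lemma mem_negSet {A : Finset α} {x : α} : x ∈ negSet A ↔ ∃ θ ∈ A, x ≠ θ := by
  simp [negSet]

lemma negSet_of_two_le {A : Finset α} (h : 2 ≤ A.card) : negSet A = Finset.univ := by
  ext x
  simp only [mem_univ, iff_true, mem_negSet]
  obtain ⟨a, ha, b, hb, hab⟩ := Finset.one_lt_card.mp h
  by_cases hx : x = a
  · exact ⟨b, hb, by simp [hx, hab]⟩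
  · exact ⟨a, ha, hx⟩

lemma card_negSet {A : Finset α} (hA : A.Nonempty) :
    Fintype.card α - 1 ≤ (negSet A).card := by
  rcases Nat.lt_or_ge A.card 2 with h | h
  · have h1 : A.card = 1 := le_antisymm (by omega) (Finset.card_pos.mpr hA)
    obtain ⟨a, ha⟩ := Finset.card_eq_one.mp h1
    subst ha
    have : negSet ({a} : Finset α) = Finset.univ \ {a} := by
      ext x; simp [mem_negSet]
    rw [this, Finset.card_sdiff_of_subset (by simp)]
    simp
  · rw [negSet_of_two_le h]; simp

lemma negBS_eq_zero_of_small (m : Finset α → ℝ) {B : Finset α}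
    (hB : B.card < Fintype.card α - 1) : negBS m B = 0 := by
  rw [negBS]
  apply Finset.sum_eq_zero
  intro A hA
  simp only [mem_filter, mem_univ, true_and] at hA
  exact absurd (hA.2 ▸ card_negSet hA.1) (by omega)

theorem double_negation_vacuous (m : Finset α → ℝ)
    (hcard : 3 ≤ Fintype.card α)
    (hempty : m ∅ = 0) (hnonneg : ∀ A, 0 ≤ m A ∧ m A ≤ 1)
    (hsum : ∑ A : Finset α, m A = 1) :
    negBS (negBS m) Finset.univ = 1 ∧
    ∀ B : Finset α, B ≠ Finset.univ → negBS (negBS m) B = 0 := by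
  have hsmall : ∀ A : Finset α, A.card ≤ 1 → negBS m A = 0 := by
    intro A hA
    exact negBS_eq_zero_of_small m (by omega)
  constructor
  · rw [negBS]
    have hfull : ∑ A ∈ Finset.univ.filter
        (fun A : Finset α => A.Nonempty ∧ negSet A = Finset.univ), negBS m A
        = ∑ A : Finset α, negBS m A := by
      apply Finset.sum_subset (Finset.filter_subset _ _)
      intro A _ hA
      simp only [mem_filter, mem_univ, true_and, not_and] at hA
      rcases A.eq_empty_or_nonempty with rfl | hne
      · exact hsmall _ (by simp)
      · have : A.card = 1 := by
          by_contra h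
          have h2 : 2 ≤ A.card := by
            have := Finset.card_pos.mpr hne; omega
          exact hA hne (negSet_of_two_le h2)
        exact hsmall _ (by omega)
    rw [hfull]
    have : ∑ A : Finset α, negBS m A
        = ∑ C ∈ Finset.univ.filter (fun C : Finset α => C.Nonempty), m C := by
      have hfib := Finset.sum_fiberwise_of_maps_to
        (s := Finset.univ.filter (fun C : Finset α => C.Nonempty))
        (t := Finset.univ) (g := negSet) (f := m) (fun C _ => Finset.mem_univ _)
      rw [← hfib]
      apply Finset.sum_congr rfl
      intro B _
      rw [negBS, Finset.filter_filter]
    rw [this]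
    have hsplit := Finset.sum_filter_add_sum_filter_not Finset.univ
      (fun C : Finset α => C.Nonempty) m
    have hnot : Finset.univ.filter (fun C : Finset α => ¬C.Nonempty) = {∅} := by
      ext C; simp [Finset.not_nonempty_iff_eq_empty]
    rw [hnot, Finset.sum_singleton, hempty, add_zero, hsum] at hsplit
    exact hsplit
  · intro B hB
    rw [negBS]
    apply Finset.sum_eq_zero
    intro A hA
    simp only [mem_filter, mem_univ, true_and] at hA
    have h1 : A.card = 1 := by
      by_contra h
      have h2 : 2 ≤ A.card := by
        have := Finset.card_pos.mpr hA.1; omega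
      exact hB (hA.2 ▸ negSet_of_two_le h2)
    exact hsmall A (by omega)
end

section
/- If |Θ| = 2, then the negation transformation is an involution on belief structures: m̄̄ = m for every belief structure m on Θ. -/
open Finset

variable {α : Type*} [Fintype α] [DecidableEq α]

lemma finset_cases_pair {a b : α} (hab : a ≠ b) (huniv : (Finset.univ : Finset α) = {a, b})
    (A : Finset α) : A = ∅ ∨ A = {a} ∨ A = {b} ∨ A = {a, b} := by
  have hsub : A ⊆ {a, b} := huniv ▸ A.subset_univ
  by_cases ha : a ∈ A <;> by_cases hb : b ∈ A
  · right; right; right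
    apply Finset.Subset.antisymm hsub
    intro x hx
    simp only [Finset.mem_insert, Finset.mem_singleton] at hx
    rcases hx with rfl | rfl <;> assumption
  · right; left
    ext x
    simp only [Finset.mem_singleton]
    constructor
    · intro hx
      rcases Finset.mem_insert.mp (hsub hx) with h | h
      · exact h
      · simp only [Finset.mem_singleton] at h; subst h; exact absurd hx hb
    · rintro rfl; exact ha
  · right; right; left
    ext x
    simp only [Finset.mem_singleton]
    constructor
    · intro hx
      rcases Finset.mem_insert.mp (hsub hx) with h | h
      · subst h; exact absurd hx ha
      · simpa using h
    · rintro rfl; exact hb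
  · left
    ext x
    simp only [Finset.notMem_empty, iff_false]
    intro hx
    rcases Finset.mem_insert.mp (hsub hx) with h | h
    · subst h; exact ha hx
    · simp only [Finset.mem_singleton] at h; subst h; exact hb hx

lemma negSet_single {a b : α} (hab : a ≠ b) (huniv : (Finset.univ : Finset α) = {a, b}) :
    negSet ({a} : Finset α) = {b} := by
  simp only [negSet, Finset.singleton_biUnion, huniv]
  ext x
  simp only [Finset.mem_sdiff, Finset.mem_insert, Finset.mem_singleton]
  constructor
  · rintro ⟨h | h, h2⟩
    · exact absurd h h2
    · exact h
  · rintro rfl; exact ⟨Or.inr rfl, fun h => hab h.symm⟩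

lemma negSet_pair {a b : α} (hab : a ≠ b) (huniv : (Finset.univ : Finset α) = {a, b}) :
    negSet ({a, b} : Finset α) = {a, b} := by
  have h1 := negSet_single hab huniv
  have h2 := negSet_single hab.symm (by rw [huniv]; exact Finset.pair_comm a b)
  rw [show ({a, b} : Finset α) = insert a {b} from rfl, negSet, Finset.biUnion_insert]
  rw [show ({b} : Finset α).biUnion (fun θ => Finset.univ \ {θ}) = negSet {b} from rfl, h2]
  rw [show (Finset.univ \ {a} : Finset α) = negSet {a} from (Finset.singleton_biUnion).symm, h1]
  rw [Finset.union_comm]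
  rfl

theorem double_negation_involution_card_two (m : Finset α → ℝ)
    (hcard : Fintype.card α = 2)
    (hempty : m ∅ = 0) (hnonneg : ∀ A, 0 ≤ m A ∧ m A ≤ 1)
    (hsum : ∑ A : Finset α, m A = 1) :
    negBS (negBS m) = m := by
  obtain ⟨a, b, hab, huniv⟩ := Finset.card_eq_two.mp (show (Finset.univ : Finset α).card = 2 by rw [Finset.card_univ, hcard])
  have ha : negSet ({a} : Finset α) = {b} := negSet_single hab huniv
  have hbpair : (Finset.univ : Finset α) = {b, a} := by rw [huniv]; exact Finset.pair_comm a b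
  have hb : negSet ({b} : Finset α) = {a} := negSet_single hab.symm hbpair
  have hp : negSet ({a, b} : Finset α) = {a, b} := negSet_pair hab huniv
  -- involution on nonempty sets
  have hinv : ∀ A : Finset α, A.Nonempty → negSet (negSet A) = A ∧ (negSet A).Nonempty := by
    intro A hA
    rcases finset_cases_pair hab huniv A with rfl | rfl | rfl | rfl
    · exact absurd hA (by simp)
    · rw [ha, hb]; exact ⟨rfl, Finset.singleton_nonempty b⟩
    · rw [hb, ha]; exact ⟨rfl, Finset.singleton_nonempty a⟩
    · rw [hp, hp]; exact ⟨rfl, Finset.insert_nonempty a {b}⟩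
  -- the filter is a singleton for nonempty B
  have hfilter : ∀ B : Finset α, B.Nonempty →
      Finset.univ.filter (fun A : Finset α => A.Nonempty ∧ negSet A = B) = {negSet B} := by
    intro B hB
    ext A
    simp only [Finset.mem_filter, Finset.mem_univ, true_and, Finset.mem_singleton]
    constructor
    · rintro ⟨hA, rfl⟩
      exact ((hinv A hA).1).symm
    · rintro rfl
      exact ⟨(hinv B hB).2, (hinv B hB).1⟩
  have hneg : ∀ (f : Finset α → ℝ) (B : Finset α), B.Nonempty → negBS f B = f (negSet B) := by
    intro f B hB
    rw [negBS, hfilter B hB, Finset.sum_singleton]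
  have hnegempty : ∀ (f : Finset α → ℝ), negBS f ∅ = 0 := by
    intro f
    rw [negBS]
    apply Finset.sum_eq_zero
    intro A hA
    simp only [Finset.mem_filter] at hA
    obtain ⟨_, hA1, hA2⟩ := hA
    exact absurd (hA2 ▸ (hinv A hA1).2) (by simp)
  funext B
  rcases B.eq_empty_or_nonempty with rfl | hB
  · rw [hnegempty, hempty]
  · rw [hneg _ _ hB, hneg _ _ (hinv B hB).2, (hinv B hB).1]
end

section
/- If |Θ| ≥ 3 and m is a fixed point of the negation transformation (m̄ = m), then m is the vacuous belief structure. -/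
open Finset

variable {α : Type*} [Fintype α] [DecidableEq α]

theorem fixed_point_is_vacuous (m : Finset α → ℝ)
    (hcard : 3 ≤ Fintype.card α)
    (hempty : m ∅ = 0) (hnonneg : ∀ A, 0 ≤ m A ∧ m A ≤ 1)
    (hsum : ∑ A : Finset α, m A = 1)
    (hfix : negBS m = m) :
    m Finset.univ = 1 ∧ ∀ B : Finset α, B ≠ Finset.univ → m B = 0 := by
  have hfix' : ∀ B, negBS m B = m B := fun B => congrFun hfix B
  -- negSet of a set with at least 2 elements is univ
  have hneg2 : ∀ A : Finset α, 2 ≤ A.card → negSet A = Finset.univ := by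
    intro A h
    obtain ⟨a, ha, b, hb, hab⟩ := Finset.one_lt_card.mp h
    ext x
    simp only [negSet, mem_biUnion, mem_sdiff, mem_univ, true_and, mem_singleton, iff_true]
    rcases eq_or_ne x a with rfl | hx
    · exact ⟨b, hb, hab⟩
    · exact ⟨a, ha, hx⟩
  have hnegs : ∀ θ : α, negSet ({θ} : Finset α) = Finset.univ \ {θ} := by
    intro θ; simp [negSet]
  have hsdiff_ne : ∀ θ : α, (Finset.univ \ {θ} : Finset α) ≠ Finset.univ := by
    intro θ h
    have : θ ∈ (Finset.univ \ {θ} : Finset α) := by rw [h]; exact mem_univ θ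
    simp at this
  -- characterize the preimage of univ
  have hiff : ∀ A : Finset α, (A.Nonempty ∧ negSet A = Finset.univ) ↔ 2 ≤ A.card := by
    intro A
    constructor
    · rintro ⟨hA, hAn⟩
      by_contra h
      interval_cases hc : A.card
      · exact hA.card_ne_zero (by omega)
      · obtain ⟨θ, rfl⟩ := Finset.card_eq_one.mp hc
        exact hsdiff_ne θ (by rw [← hnegs θ]; exact hAn)
    · intro h
      exact ⟨Finset.card_pos.mp (by omega), hneg2 A h⟩
  have huniv : m Finset.univ =
      ∑ A ∈ Finset.univ.filter (fun A : Finset α => 2 ≤ A.card), m A := by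
    rw [← hfix' Finset.univ, negBS]
    congr 1
    exact Finset.filter_congr (fun A _ => hiff A)
  -- all sets of card ≥ 2 other than univ have mass 0
  have hzero : ∀ A : Finset α, 2 ≤ A.card → A ≠ Finset.univ → m A = 0 := by
    have hmem : Finset.univ ∈ Finset.univ.filter (fun A : Finset α => 2 ≤ A.card) := by
      simp [Finset.card_univ]; omega
    have hsplit := Finset.sum_erase_add _ m hmem
    have hzsum : ∑ A ∈ (Finset.univ.filter (fun A : Finset α => 2 ≤ A.card)).erase
        Finset.univ, m A = 0 := by linarith [huniv, hsplit]
    intro A hA hAne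
    have := (Finset.sum_eq_zero_iff_of_nonneg (fun B _ => (hnonneg B).1)).mp hzsum
    exact this A (by simp [Finset.mem_erase, hAne, hA])
  -- singletons have mass 0
  have hsingle : ∀ θ : α, m ({θ} : Finset α) = 0 := by
    intro θ
    have hcard' : 2 ≤ (Finset.univ \ {θ} : Finset α).card := by
      rw [Finset.card_univ_diff]
      simp
      omega
    have hpre : Finset.univ.filter
        (fun A : Finset α => A.Nonempty ∧ negSet A = Finset.univ \ {θ}) = {({θ} : Finset α)} := by
      ext A
      simp only [mem_filter, mem_univ, true_and, mem_singleton]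
      constructor
      · rintro ⟨hA, hAn⟩
        rcases lt_or_ge A.card 2 with h | h
        · have h1 : A.card = 1 := by
            have := hA.card_pos; omega
          obtain ⟨θ', rfl⟩ := Finset.card_eq_one.mp h1
          rw [hnegs θ'] at hAn
          have : θ' ∉ (Finset.univ \ {θ'} : Finset α) := by simp
          rw [hAn] at this
          simp only [mem_sdiff, mem_univ, true_and, mem_singleton, not_not] at this
          rw [this]
        · exfalso
          rw [hneg2 A h] at hAn
          exact hsdiff_ne θ hAn.symm
      · rintro rfl
        exact ⟨Finset.singleton_nonempty θ, hnegs θ⟩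
    have := hfix' (Finset.univ \ {θ})
    rw [negBS, hpre, Finset.sum_singleton] at this
    rw [this]
    exact hzero _ hcard' (hsdiff_ne θ)
  have hall : ∀ B : Finset α, B ≠ Finset.univ → m B = 0 := by
    intro B hB
    rcases lt_or_ge B.card 2 with h | h
    · interval_cases hc : B.card
      · rw [Finset.card_eq_zero.mp hc]; exact hempty
      · obtain ⟨θ, rfl⟩ := Finset.card_eq_one.mp hc
        exact hsingle θ
    · exact hzero B h hB
  refine ⟨?_, hall⟩
  rw [← hsum, Finset.sum_eq_single_of_mem Finset.univ (mem_univ _)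
    (fun B _ hB => hall B hB)]
end

section
/- Iterating Yager's negation converges to the uniform distribution: for n ≥ 3, the k-th iterate of the negation of a probability distribution p satisfies p_i^{(k)} − 1/n = (−1/(n−1))^k (p_i − 1/n), hence p^{(k)} → (1/n,…,1/n) as k → ∞. -/
open Finset Filter

/-- Yager's negation transformation of a probability distribution. -/
noncomputable def yagerNeg (n : ℕ) (p : Fin n → ℝ) : Fin n → ℝ :=
  fun i => (1 - p i) / (n - 1)

theorem yager_iterates_converge (n : ℕ) (hn : 3 ≤ n)
    (p : Fin n → ℝ) (hp : ∀ i, 0 ≤ p i) (hsum : ∑ i, p i = 1) :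
    (∀ k : ℕ, ∀ i : Fin n,
      (yagerNeg n)^[k] p i - 1 / n = (-(1 / ((n : ℝ) - 1)))^k * (p i - 1 / n)) ∧
    Tendsto (fun k : ℕ => (yagerNeg n)^[k] p) atTop (nhds (fun _ : Fin n => 1 / (n : ℝ))) := by
  have hn3 : (3 : ℝ) ≤ (n : ℝ) := by exact_mod_cast hn
  have hne : (n : ℝ) - 1 ≠ 0 := by linarith
  have hne0 : (n : ℝ) ≠ 0 := by linarith
  have key : ∀ k : ℕ, ∀ i : Fin n,
      (yagerNeg n)^[k] p i - 1 / n = (-(1 / ((n : ℝ) - 1)))^k * (p i - 1 / n) := by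
    intro k
    induction k with
    | zero => intro i; simp
    | succ k ih =>
      intro i
      rw [Function.iterate_succ_apply']
      have := ih i
      simp only [yagerNeg]
      rw [pow_succ']
      have h1 : (1 - (yagerNeg n)^[k] p i) / ((n : ℝ) - 1) - 1 / n
          = (-(1 / ((n : ℝ) - 1))) * ((yagerNeg n)^[k] p i - 1 / n) := by
        field_simp
        ring
      rw [h1, this]
      ring
  refine ⟨key, ?_⟩
  rw [tendsto_pi_nhds]
  intro i
  have habs : |(-(1 / ((n : ℝ) - 1)))| < 1 := by
    rw [abs_neg, abs_of_nonneg (le_of_lt (by apply div_pos one_pos; linarith))]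
    rw [div_lt_one (by linarith)]
    linarith
  have h := tendsto_pow_atTop_nhds_zero_of_abs_lt_one habs
  have h2 := h.mul_const (p i - 1 / n)
  rw [zero_mul] at h2
  have h3 : (fun k : ℕ => (yagerNeg n)^[k] p i)
      = fun k => (-(1 / ((n : ℝ) - 1)))^k * (p i - 1 / n) + 1 / n := by
    funext k
    have := key k i
    linarith
  rw [h3]
  have := h2.add_const (1 / (n : ℝ))
  simpa using this
end
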